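/- Let a ∈ F_{q^m}[x] satisfy a ≡ a^q (mod h^s) where h is irreducible over F_{q^m} and s ≥ 1. Then there exists α ∈ F_q with a ≡ α (mod h^s). -/

import Mathlib

open Polynomial

theorem aux_prod_X_sub_C (F : Type*) [Field F] [Fintype F] :
    ∏ α : F, (X - C α) = (X ^ Fintype.card F - X : F[X]) := by
  classical
  have h1 : (1 : ℕ) < Fintype.card F := Fintype.one_lt_card
  have hmonic : (X ^ Fintype.card F - X : F[X]).Monic := by
    apply Polynomial.monic_X_pow_sub
    simpa using h1
  have hdeg : (X ^ Fintype.card F - X : F[X]).natDegree = Fintype.card F :=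
    FiniteField.X_pow_card_sub_X_natDegree_eq F h1
  have hroots : (X ^ Fintype.card F - X : F[X]).roots = Finset.univ.val :=
    FiniteField.roots_X_pow_card_sub_X F
  have := prod_multiset_X_sub_C_of_monic_of_roots_card_eq hmonic
    (by rw [hroots, hdeg]; simp [Finset.card_univ])
  rw [hroots] at this
  rw [← this]
  rfl

/-- If `a ≡ a^q (mod h^s)` with `h` irreducible over `F_{q^m}` and `s ≥ 1`,
then `a` is congruent modulo `h^s` to a constant from `F_q`. -/
theorem stmt5 (F E : Type*) [Field F] [Fintype F] [Field E] [Fintype E]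
    [Algebra F E] (q m : ℕ) (hq : Fintype.card F = q)
    (hE : Fintype.card E = q ^ m) (hm : 1 ≤ m)
    (h : E[X]) (hirr : Irreducible h) (s : ℕ) (hs : 1 ≤ s)
    (a : E[X]) (ha : h ^ s ∣ a ^ q - a) :
    ∃ α : F, h ^ s ∣ a - Polynomial.C (algebraMap F E α) := by
  classical
  subst hq
  set φ : F[X] →+* E[X] :=
    eval₂RingHom ((Polynomial.C : E →+* E[X]).comp (algebraMap F E)) a with hφ
  have key : ∏ α : F, (a - C (algebraMap F E α)) = a ^ Fintype.card F - a := by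
    have h2 := congrArg φ (aux_prod_X_sub_C F)
    rw [map_prod] at h2
    simpa [hφ] using h2
  have hprime : Prime h := hirr.prime
  have hdvd : h ^ s ∣ ∏ α : F, (a - C (algebraMap F E α)) := key ▸ ha
  have hdvd1 : h ∣ ∏ α : F, (a - C (algebraMap F E α)) :=
    (dvd_pow_self h (Nat.one_le_iff_ne_zero.mp hs)).trans hdvd
  obtain ⟨α₀, -, hα₀⟩ := hprime.exists_mem_finset_dvd hdvd1
  refine ⟨α₀, ?_⟩
  set g : E[X] := ∏ α ∈ Finset.univ.erase α₀, (a - C (algebraMap F E α)) with hg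
  have hsplit : (a - C (algebraMap F E α₀)) * g = ∏ α : F, (a - C (algebraMap F E α)) := by
    rw [hg]
    exact Finset.mul_prod_erase Finset.univ (fun α => a - C (algebraMap F E α))
      (Finset.mem_univ α₀)
  have hndvd : ¬ h ∣ g := by
    intro hdg
    obtain ⟨β, hβmem, hβ⟩ := hprime.exists_mem_finset_dvd hdg
    have hβne : β ≠ α₀ := (Finset.mem_erase.mp hβmem).1
    have : h ∣ C (algebraMap F E α₀) - C (algebraMap F E β) := by
      have := dvd_sub hβ hα₀
      simpa using this
    rw [← map_sub] at this
    have hne : algebraMap F E α₀ - algebraMap F E β ≠ 0 := by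
      rw [sub_ne_zero]
      exact fun hc => hβne ((algebraMap F E).injective hc).symm
    exact hirr.not_isUnit (isUnit_of_dvd_unit this (isUnit_C.mpr (hne.isUnit)))
  have hcop : IsCoprime (h ^ s) g := (hirr.coprime_iff_not_dvd.mpr hndvd).pow_left
  exact hcop.dvd_of_dvd_mul_right (hsplit ▸ hdvd)
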